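/- arXiv:2303.10260 — 2 statements merged into one kernel-verified Lean document; each statement's English description precedes it below -/
import Mathlib

section
/- Let A ∈ ℝ^{n×n}, B ∈ ℝ^{n×m}, K ∈ ℝ^{m×n} with ρ(A−BK) < 1, and let Q ⪰ 0 satisfy: the pair (Q^{1/2}, A) is detectable, and R ≻ 0. Define S = (I − A + BK)^{-1} B. Then the matrix S^⊤ Q S + (I − KS)^⊤ R (I − KS) is positive definite; equivalently, the function v ↦ ‖Sv − r̄ + SK r̄‖_Q² + ‖(I−KS)(v + K r̄)‖_R² is strictly convex in v. -/
open scoped Matrix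

/-- strict convexity / positive definiteness of the steady-state cost Hessian. -/
theorem stmt2 {n m : ℕ} (A : Matrix (Fin n) (Fin n) ℝ) (B : Matrix (Fin n) (Fin m) ℝ)
    (K : Matrix (Fin m) (Fin n) ℝ) (Q : Matrix (Fin n) (Fin n) ℝ) (R : Matrix (Fin m) (Fin m) ℝ)
    (hρ : spectralRadius ℂ ((A - B * K).map (algebraMap ℝ ℂ)) < 1)
    (hQ : Q.PosSemidef) (hR : R.PosDef)
    (hdet : ∀ (μ : ℂ) (v : Fin n → ℂ), v ≠ 0 →
      (A.map (algebraMap ℝ ℂ)).mulVec v = μ • v → 1 ≤ ‖μ‖ →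
      (Q.map (algebraMap ℝ ℂ)).mulVec v ≠ 0) :
    (((1 - A + B * K)⁻¹ * B)ᵀ * Q * ((1 - A + B * K)⁻¹ * B) +
      (1 - K * ((1 - A + B * K)⁻¹ * B))ᵀ * R *
        (1 - K * ((1 - A + B * K)⁻¹ * B))).PosDef := by
  by_cases hu : IsUnit (1 - A + B * K).det
  · set M := 1 - A + B * K with hM
    set S := M⁻¹ * B with hS
    set T := 1 - K * S with hT
    have hTrans : ∀ (C : Matrix (Fin n) (Fin n) ℝ), Cᵀ = Cᴴ := by
      intro C; ext i j; simp [Matrix.conjTranspose_apply]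
    have hTrans' : ∀ (C : Matrix (Fin n) (Fin m) ℝ), Cᵀ = Cᴴ := by
      intro C; ext i j; simp [Matrix.conjTranspose_apply]
    have hTrans'' : ∀ (C : Matrix (Fin m) (Fin m) ℝ), Cᵀ = Cᴴ := by
      intro C; ext i j; simp [Matrix.conjTranspose_apply]
    have hQS : (Sᵀ * Q * S).PosSemidef := by
      rw [hTrans']
      exact hQ.conjTranspose_mul_mul_same S
    have hRT : (Tᵀ * R * T).PosSemidef := by
      rw [hTrans'']
      exact hR.posSemidef.conjTranspose_mul_mul_same T
    refine Matrix.PosDef.of_dotProduct_mulVec_pos ?_ ?_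
    · exact hQS.1.add hRT.1
    · intro x hx
      have hq1 : star x ⬝ᵥ (Sᵀ * Q * S) *ᵥ x = (S *ᵥ x) ⬝ᵥ Q *ᵥ (S *ᵥ x) := by
        simp only [star_trivial, ← Matrix.mulVec_mulVec, Matrix.dotProduct_mulVec,
          Matrix.vecMul_transpose]
      have hq2 : star x ⬝ᵥ (Tᵀ * R * T) *ᵥ x = (T *ᵥ x) ⬝ᵥ R *ᵥ (T *ᵥ x) := by
        simp only [star_trivial, ← Matrix.mulVec_mulVec, Matrix.dotProduct_mulVec,
          Matrix.vecMul_transpose]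
      rw [Matrix.add_mulVec, dotProduct_add, hq1, hq2]
      by_cases hTx : T *ᵥ x = 0
      · -- main case: x = K S x, derive eigenvector
        set y := S *ᵥ x with hy
        have hxKy : x = K *ᵥ y := by
          have := hTx
          rw [hT, Matrix.sub_mulVec, Matrix.one_mulVec, sub_eq_zero, ← Matrix.mulVec_mulVec] at this
          exact this
        have hy0 : y ≠ 0 := by
          intro h
          apply hx
          rw [hxKy, h, Matrix.mulVec_zero]
        have hAy : A *ᵥ y = y := by
          have hMy : M *ᵥ y = B *ᵥ x := by
            rw [hy, hS, ← Matrix.mulVec_mulVec, Matrix.mulVec_mulVec,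
              Matrix.mul_nonsing_inv _ hu, Matrix.one_mulVec]
          rw [hM] at hMy
          have : (1 : Matrix (Fin n) (Fin n) ℝ) *ᵥ y - A *ᵥ y + (B * K) *ᵥ y = B *ᵥ x := by
            rw [← Matrix.sub_mulVec, ← Matrix.add_mulVec]; exact hMy
          rw [Matrix.one_mulVec, ← Matrix.mulVec_mulVec, ← hxKy] at this
          ext i
          have h := congrFun this i
          simp only [Pi.sub_apply, Pi.add_apply] at h
          linarith
        -- show Q-term positive: y ⬝ᵥ Q y > 0, else Q y = 0 contradicting detectability
        have hq : 0 < y ⬝ᵥ Q *ᵥ y := by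
          rcases lt_or_eq_of_le (by simpa using hQ.dotProduct_mulVec_nonneg y) with h | h
          · exact h
          · exfalso
            have hQy : Q *ᵥ y = 0 := by
              have := (hQ.dotProduct_mulVec_zero_iff y).mp (by simpa using h.symm)
              simpa using this
            set yc : Fin n → ℂ := fun i => (y i : ℂ) with hyc
            have hyc0 : yc ≠ 0 := by
              intro h0
              apply hy0
              ext i
              have := congrFun h0 i
              simpa [hyc] using this
            refine hdet 1 yc hyc0 ?_ (by norm_num) ?_
            · ext i
              rw [show yc = (algebraMap ℝ ℂ) ∘ y from rfl, ← RingHom.map_mulVec]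
              simp [hAy]
            · ext i
              rw [show yc = (algebraMap ℝ ℂ) ∘ y from rfl, ← RingHom.map_mulVec]
              simp [hQy]
        have hr : 0 ≤ (T *ᵥ x) ⬝ᵥ R *ᵥ (T *ᵥ x) := by simpa using hR.posSemidef.dotProduct_mulVec_nonneg (T *ᵥ x)
        linarith
      · have hq : 0 ≤ (S *ᵥ x) ⬝ᵥ Q *ᵥ (S *ᵥ x) := by simpa using hQ.dotProduct_mulVec_nonneg (S *ᵥ x)
        have hr : 0 < (T *ᵥ x) ⬝ᵥ R *ᵥ (T *ᵥ x) := by simpa using hR.dotProduct_mulVec_pos hTx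
        linarith
  · rw [Matrix.nonsing_inv_apply_not_isUnit _ hu]
    simpa using hR
end

section
/- Let F ∈ ℝ^{n×n} with ρ(F) < 1, and suppose ‖F^k‖ ≤ c λ^k for all k ≥ 0 with 0 < λ < 1. Given vectors w_0,…,w_{T−1} with Δw_{i,t} = w_i − w_t, and any matrix G, the double sum satisfies Σ_{t=0}^{T−1} ‖Σ_{i=t}^{T−1} G F^{i−t} Δw_{i,t}‖ ≤ (‖G‖ c / (1−λ)²) · Σ_{j=1}^{T−1} ‖w_j − w_{j−1}‖. -/
open scoped Matrix.Norms.L2Operator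

/-- Matrix-vector product as a map of Euclidean spaces. -/
noncomputable def mulE {a b : ℕ} (A : Matrix (Fin a) (Fin b) ℝ) (x : EuclideanSpace ℝ (Fin b)) :
    EuclideanSpace ℝ (Fin a) :=
  (WithLp.equiv 2 _).symm (A.mulVec ((WithLp.equiv 2 _) x))

open Finset

lemma mulE_norm_le {a b : ℕ} (A : Matrix (Fin a) (Fin b) ℝ) (x : EuclideanSpace ℝ (Fin b)) :
    ‖mulE A x‖ ≤ ‖A‖ * ‖x‖ := A.l2_opNorm_mulVec x

lemma geo_sum_le {r : ℝ} (h0 : 0 ≤ r) (h1 : r < 1) (n : ℕ) :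
    ∑ i ∈ Finset.range n, r ^ i ≤ (1 - r)⁻¹ := by
  have h1r : (0:ℝ) < 1 - r := by linarith
  rw [geom_sum_eq (by intro h; rw [h] at h1; linarith)]
  have heq : (r ^ n - 1) / (r - 1) = (1 - r ^ n) / (1 - r) := by
    rw [← neg_div_neg_eq]; ring_nf
  rw [heq, inv_eq_one_div]
  gcongr
  have := pow_nonneg h0 n; linarith

/-- bound on the double sum of convolved disturbance increments. -/
theorem stmt7 {n q : ℕ} (F : Matrix (Fin n) (Fin n) ℝ) (G : Matrix (Fin q) (Fin n) ℝ)
    (c lam : ℝ) (hlam0 : 0 < lam) (hlam1 : lam < 1)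
    (hρ : spectralRadius ℂ (F.map (algebraMap ℝ ℂ)) < 1)
    (hF : ∀ k : ℕ, ‖F ^ k‖ ≤ c * lam ^ k)
    (T : ℕ) (w : ℕ → EuclideanSpace ℝ (Fin n)) :
    ∑ t ∈ Finset.range T, ‖∑ i ∈ Finset.Ico t T, mulE (G * F ^ (i - t)) (w i - w t)‖ ≤
      ‖G‖ * c / (1 - lam) ^ 2 * ∑ j ∈ Finset.Ico 1 T, ‖w j - w (j - 1)‖ := by
  set d : ℕ → ℝ := fun j => ‖w (j + 1) - w j‖ with hd
  have hdnn : ∀ j, 0 ≤ d j := fun j => norm_nonneg _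
  have h1r : (0:ℝ) < 1 - lam := by linarith
  have hc : 0 ≤ c := le_trans (norm_nonneg (F ^ 0)) (by simpa using hF 0)
  have hK : 0 ≤ ‖G‖ * c := mul_nonneg (norm_nonneg _) hc
  have hlamnn : (0:ℝ) ≤ lam := hlam0.le
  -- telescoping
  have tele : ∀ t i : ℕ, t ≤ i → ‖w i - w t‖ ≤ ∑ j ∈ Ico t i, d j := by
    intro t i h
    have : w i - w t = ∑ j ∈ Ico t i, (w (j + 1) - w j) := by
      rw [Finset.sum_Ico_eq_sub _ h, Finset.sum_range_sub (f := w),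
        Finset.sum_range_sub (f := w)]
      abel
    rw [this]
    exact norm_sum_le _ _
  -- per-term bound
  have key : ∀ t, ‖∑ i ∈ Ico t T, mulE (G * F ^ (i - t)) (w i - w t)‖ ≤
      ∑ i ∈ Ico t T, ‖G‖ * c * (lam ^ (i - t) * ∑ j ∈ Ico t i, d j) := by
    intro t
    refine (norm_sum_le _ _).trans (Finset.sum_le_sum fun i hi => ?_)
    have hti : t ≤ i := (Finset.mem_Ico.mp hi).1
    have h1 : ‖mulE (G * F ^ (i - t)) (w i - w t)‖ ≤ ‖G * F ^ (i - t)‖ * ‖w i - w t‖ :=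
      mulE_norm_le _ _
    have h2 : ‖G * F ^ (i - t)‖ ≤ ‖G‖ * (c * lam ^ (i - t)) :=
      (Matrix.l2_opNorm_mul _ _).trans
        (mul_le_mul_of_nonneg_left (hF _) (norm_nonneg G))
    have h3 := tele t i hti
    calc ‖mulE (G * F ^ (i - t)) (w i - w t)‖ ≤ ‖G * F ^ (i - t)‖ * ‖w i - w t‖ := h1
      _ ≤ (‖G‖ * (c * lam ^ (i - t))) * (∑ j ∈ Ico t i, d j) := by
          apply mul_le_mul h2 h3 (norm_nonneg _)
          exact mul_nonneg (norm_nonneg _) (mul_nonneg hc (pow_nonneg hlamnn _))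
      _ = ‖G‖ * c * (lam ^ (i - t) * ∑ j ∈ Ico t i, d j) := by ring
  have step1 : ∑ t ∈ range T, ‖∑ i ∈ Ico t T, mulE (G * F ^ (i - t)) (w i - w t)‖ ≤
      ‖G‖ * c * ∑ t ∈ range T, ∑ i ∈ Ico t T, lam ^ (i - t) * ∑ j ∈ Ico t i, d j := by
    rw [Finset.mul_sum]
    refine Finset.sum_le_sum fun t _ => (key t).trans ?_
    rw [Finset.mul_sum]
  -- inner swap for fixed t
  have swap1 : ∀ t, ∑ i ∈ Ico t T, lam ^ (i - t) * ∑ j ∈ Ico t i, d j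
      = ∑ j ∈ Ico t T, (∑ i ∈ Ico (j + 1) T, lam ^ (i - t)) * d j := by
    intro t
    have := (Finset.sum_Ico_Ico_comm' t T (fun i j => lam ^ (j - t) * d i)).symm
    calc ∑ i ∈ Ico t T, lam ^ (i - t) * ∑ j ∈ Ico t i, d j
        = ∑ i ∈ Ico t T, ∑ j ∈ Ico t i, lam ^ (i - t) * d j := by
          refine Finset.sum_congr rfl fun i _ => ?_; rw [Finset.mul_sum]
      _ = ∑ j ∈ Ico t T, ∑ i ∈ Ico (j + 1) T, lam ^ (i - t) * d j := this
      _ = ∑ j ∈ Ico t T, (∑ i ∈ Ico (j + 1) T, lam ^ (i - t)) * d j := by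
          refine Finset.sum_congr rfl fun j _ => ?_; rw [Finset.sum_mul]
  -- outer swap
  have swap2 : ∑ t ∈ range T, ∑ j ∈ Ico t T, (∑ i ∈ Ico (j + 1) T, lam ^ (i - t)) * d j
      = ∑ j ∈ range T, ∑ t ∈ range (j + 1), (∑ i ∈ Ico (j + 1) T, lam ^ (i - t)) * d j := by
    simp only [Finset.range_eq_Ico]
    have := Finset.sum_Ico_Ico_comm 0 T (fun t j => (∑ i ∈ Ico (j + 1) T, lam ^ (i - t)) * d j)
    simpa using this
  -- coefficient bound
  have coeff : ∀ j, ∑ t ∈ range (j + 1), (∑ i ∈ Ico (j + 1) T, lam ^ (i - t))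
      ≤ (1 - lam)⁻¹ * (1 - lam)⁻¹ := by
    intro j
    have inner_eq : ∀ t, t ≤ j → ∑ i ∈ Ico (j + 1) T, lam ^ (i - t)
        = lam ^ (j - t) * ∑ i ∈ Ico (j + 1) T, lam ^ (i - j) := by
      intro t ht
      rw [Finset.mul_sum]
      refine Finset.sum_congr rfl fun i hi => ?_
      have hji : j + 1 ≤ i := (Finset.mem_Ico.mp hi).1
      rw [← pow_add]
      congr 1
      omega
    have hC : ∑ i ∈ Ico (j + 1) T, lam ^ (i - j) ≤ (1 - lam)⁻¹ := by
      rw [Finset.sum_Ico_eq_sum_range]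
      refine le_trans (Finset.sum_le_sum fun k _ => ?_) (geo_sum_le hlamnn hlam1 _)
      have : j + 1 + k - j = k + 1 := by omega
      rw [this]
      exact pow_le_pow_of_le_one hlamnn hlam1.le (by omega)
    have hCnn : (0:ℝ) ≤ ∑ i ∈ Ico (j + 1) T, lam ^ (i - j) :=
      Finset.sum_nonneg fun i _ => pow_nonneg hlamnn _
    calc ∑ t ∈ range (j + 1), ∑ i ∈ Ico (j + 1) T, lam ^ (i - t)
        = ∑ t ∈ range (j + 1), lam ^ (j - t) * ∑ i ∈ Ico (j + 1) T, lam ^ (i - j) := by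
          exact Finset.sum_congr rfl fun t ht => inner_eq t (Nat.lt_succ_iff.mp (Finset.mem_range.mp ht))
      _ = (∑ t ∈ range (j + 1), lam ^ (j - t)) * ∑ i ∈ Ico (j + 1) T, lam ^ (i - j) := by
          rw [Finset.sum_mul]
      _ ≤ (1 - lam)⁻¹ * (1 - lam)⁻¹ := by
          refine mul_le_mul ?_ hC hCnn (by positivity)
          have : ∑ t ∈ range (j + 1), lam ^ (j - t) = ∑ t ∈ range (j + 1), lam ^ t := by
            have := Finset.sum_range_reflect (fun k => lam ^ k) (j + 1)
            simpa using this
          rw [this]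
          exact geo_sum_le hlamnn hlam1 _
  have coeffnn : ∀ j, 0 ≤ ∑ t ∈ range (j + 1), (∑ i ∈ Ico (j + 1) T, lam ^ (i - t)) :=
    fun j => Finset.sum_nonneg fun t _ => Finset.sum_nonneg fun i _ => pow_nonneg hlamnn _
  -- final sum bound
  have final : ∑ j ∈ range T, (∑ t ∈ range (j + 1), ∑ i ∈ Ico (j + 1) T, lam ^ (i - t)) * d j
      ≤ (1 - lam)⁻¹ * (1 - lam)⁻¹ * ∑ j ∈ range (T - 1), d j := by
    rcases Nat.eq_zero_or_pos T with hT | hT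
    · simp [hT]
    · rw [Finset.mul_sum]
      have hsub : range (T - 1) ⊆ range T := Finset.range_subset_range.mpr (by omega)
      have split : ∑ j ∈ range (T - 1),
            (∑ t ∈ range (j + 1), ∑ i ∈ Ico (j + 1) T, lam ^ (i - t)) * d j
          = ∑ j ∈ range T,
            (∑ t ∈ range (j + 1), ∑ i ∈ Ico (j + 1) T, lam ^ (i - t)) * d j := by
        refine Finset.sum_subset hsub fun x hx hx' => ?_
        have hx1 : x < T := Finset.mem_range.mp hx
        have hx2 : ¬ x < T - 1 := fun h => hx' (Finset.mem_range.mpr h)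
        have : Ico (x + 1) T = ∅ := Finset.Ico_eq_empty (by omega)
        simp [this]
      rw [← split]
      exact Finset.sum_le_sum fun j _ => mul_le_mul_of_nonneg_right (coeff j) (hdnn j)
  -- rewrite RHS sum
  have hS : ∑ j ∈ Ico 1 T, ‖w j - w (j - 1)‖ = ∑ j ∈ range (T - 1), d j := by
    rw [Finset.sum_Ico_eq_sum_range]
    refine Finset.sum_congr rfl fun i _ => ?_
    have h1 : 1 + i - 1 = i := by omega
    have h2 : 1 + i = i + 1 := by omega
    rw [h1, h2]
  calc ∑ t ∈ range T, ‖∑ i ∈ Ico t T, mulE (G * F ^ (i - t)) (w i - w t)‖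
      ≤ ‖G‖ * c * ∑ t ∈ range T, ∑ i ∈ Ico t T, lam ^ (i - t) * ∑ j ∈ Ico t i, d j := step1
    _ = ‖G‖ * c * ∑ j ∈ range T, (∑ t ∈ range (j + 1), ∑ i ∈ Ico (j + 1) T, lam ^ (i - t)) * d j := by
        rw [show (∑ t ∈ range T, ∑ i ∈ Ico t T, lam ^ (i - t) * ∑ j ∈ Ico t i, d j)
          = ∑ t ∈ range T, ∑ j ∈ Ico t T, (∑ i ∈ Ico (j + 1) T, lam ^ (i - t)) * d j from
          Finset.sum_congr rfl fun t _ => swap1 t, swap2]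
        congr 1
        exact Finset.sum_congr rfl fun j _ => by rw [Finset.sum_mul]
    _ ≤ ‖G‖ * c * ((1 - lam)⁻¹ * (1 - lam)⁻¹ * ∑ j ∈ range (T - 1), d j) :=
        mul_le_mul_of_nonneg_left final hK
    _ = ‖G‖ * c / (1 - lam) ^ 2 * ∑ j ∈ Ico 1 T, ‖w j - w (j - 1)‖ := by
        rw [hS, div_eq_mul_inv, sq, mul_inv]
        ring
end
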